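/- Let β = √2 − 1 and let X be a finite set of nonzero points in ℝ². Assume that for every unit vector v ∈ ℝ² the open cone {x : ⟨v, x⟩ > (1 + β²)^{-1/2} ‖x‖₂} contains at least one point of X (the cone criterion, with total opening angle 45°). Then a positive Laplace stencil on X exists: there are coefficients s_x ≥ 0, x ∈ X, with Σ_{x∈X} s_x x = 0 and Σ_{x∈X} s_x x x^T = 2 I₂. -/

import Mathlib

open Matrix BigOperators

namespace ConeStencilAux

noncomputable section

abbrev E2 := EuclideanSpace ℝ (Fin 2)
abbrev V5 := EuclideanSpace ℝ (Fin 5)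

noncomputable local instance : DecidableEq V5 := Classical.decEq _

noncomputable def v2 (a b : ℝ) : E2 := (WithLp.equiv 2 (Fin 2 → ℝ)).symm ![a, b]
@[simp] lemma v2_apply0 (a b : ℝ) : v2 a b 0 = a := rfl
@[simp] lemma v2_apply1 (a b : ℝ) : v2 a b 1 = b := rfl

lemma inner_coord (x y : E2) : (inner ℝ x y : ℝ) = x 0 * y 0 + x 1 * y 1 := by
  simp [PiLp.inner_apply, Fin.sum_univ_two, RCLike.inner_apply, mul_comm]

lemma norm_sq_coord (x : E2) : ‖x‖ ^ 2 = x 0 ^ 2 + x 1 ^ 2 := by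
  rw [← real_inner_self_eq_norm_sq, inner_coord]; ring

noncomputable def φV (x : E2) : V5 :=
  (WithLp.equiv 2 (Fin 5 → ℝ)).symm ![x 0, x 1, x 0 ^ 2, x 0 * x 1, x 1 ^ 2]

@[simp] lemma φV_apply0 (x : E2) : φV x 0 = x 0 := rfl
@[simp] lemma φV_apply1 (x : E2) : φV x 1 = x 1 := rfl
@[simp] lemma φV_apply2 (x : E2) : φV x 2 = x 0 ^ 2 := rfl
@[simp] lemma φV_apply3 (x : E2) : φV x 3 = x 0 * x 1 := rfl
@[simp] lemma φV_apply4 (x : E2) : φV x 4 = x 1 ^ 2 := rfl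

noncomputable def ψV (x : E2) : V5 := ‖x‖⁻¹ ^ 2 • φV x

noncomputable def Es (i : Fin 5) : V5 := EuclideanSpace.single i (1 : ℝ)

noncomputable def b₀ : V5 := (1 / 2 : ℝ) • Es 2 + (1 / 2 : ℝ) • Es 4

lemma decomp (x : E2) : φV x = x 0 • Es 0 + x 1 • Es 1 + (x 0 ^ 2) • Es 2
    + (x 0 * x 1) • Es 3 + (x 1 ^ 2) • Es 4 := by
  apply PiLp.ext
  intro i
  fin_cases i <;>
    simp [Es, φV, EuclideanSpace.single_apply, PiLp.add_apply, PiLp.smul_apply]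

lemma norm_eq_one_of_sq {x : E2} (h : x 0 ^ 2 + x 1 ^ 2 = 1) : ‖x‖ = 1 := by
  have h2 : ‖x‖ ^ 2 = 1 := by rw [norm_sq_coord, h]
  rw [← Real.sqrt_sq (norm_nonneg x), h2, Real.sqrt_one]

lemma perp_sq (a' u : E2) (ha : ‖a'‖ = 1) (hu : ‖u‖ = 1) (τ : ℝ) (hτ2 : τ ^ 2 = 1) :
    (inner ℝ (τ • v2 (-(a' 1)) (a' 0)) u : ℝ) ^ 2 = 1 - (inner ℝ a' u : ℝ) ^ 2 := by
  have ha2 : a' 0 ^ 2 + a' 1 ^ 2 = 1 := by rw [← norm_sq_coord, ha]; norm_num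
  have hu2 : u 0 ^ 2 + u 1 ^ 2 = 1 := by rw [← norm_sq_coord, hu]; norm_num
  have hsm : ∀ i, (τ • v2 (-(a' 1)) (a' 0)) i = τ * (v2 (-(a' 1)) (a' 0)) i := fun i => rfl
  rw [inner_coord, inner_coord, hsm, hsm]
  simp only [v2_apply0, v2_apply1]
  linear_combination ((-(a' 1)) * u 0 + a' 0 * u 1) ^ 2 * hτ2
    + (u 0 ^ 2 + u 1 ^ 2) * ha2 + hu2



lemma sph_ineq {F : Type*} [NormedAddCommGroup F] [InnerProductSpace ℝ F]
    (p q r : F) (hp : ‖p‖ = 1) (hq : ‖q‖ = 1) (hr : ‖r‖ = 1) :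
    (inner ℝ p q : ℝ) * (inner ℝ q r : ℝ) -
      Real.sqrt (1 - (inner ℝ p q : ℝ) ^ 2) * Real.sqrt (1 - (inner ℝ q r : ℝ) ^ 2)
      ≤ (inner ℝ p r : ℝ) := by
  have hqq : (inner ℝ q q : ℝ) = 1 := by rw [real_inner_self_eq_norm_sq, hq]; norm_num
  have hpp : (inner ℝ p p : ℝ) = 1 := by rw [real_inner_self_eq_norm_sq, hp]; norm_num
  have hrr : (inner ℝ r r : ℝ) = 1 := by rw [real_inner_self_eq_norm_sq, hr]; norm_num
  have h1 : (inner ℝ (p - (inner ℝ p q : ℝ) • q) (r - (inner ℝ q r : ℝ) • q) : ℝ)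
      = (inner ℝ p r : ℝ) - (inner ℝ p q : ℝ) * (inner ℝ q r : ℝ) := by
    simp only [inner_sub_left, inner_sub_right, real_inner_smul_left, real_inner_smul_right,
      hqq, real_inner_comm q p]
    ring
  have hp'n : ‖p - (inner ℝ p q : ℝ) • q‖ ^ 2 = 1 - (inner ℝ p q : ℝ) ^ 2 := by
    rw [← real_inner_self_eq_norm_sq]
    simp only [inner_sub_left, inner_sub_right, real_inner_smul_left, real_inner_smul_right,
      hqq, hpp, real_inner_comm q p]
    ring
  have hr'n : ‖r - (inner ℝ q r : ℝ) • q‖ ^ 2 = 1 - (inner ℝ q r : ℝ) ^ 2 := by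
    rw [← real_inner_self_eq_norm_sq]
    simp only [inner_sub_left, inner_sub_right, real_inner_smul_left, real_inner_smul_right,
      hqq, hrr, real_inner_comm q r]
    ring
  have hps : Real.sqrt (1 - (inner ℝ p q : ℝ) ^ 2) = ‖p - (inner ℝ p q : ℝ) • q‖ := by
    rw [← hp'n, Real.sqrt_sq (norm_nonneg _)]
  have hrs : Real.sqrt (1 - (inner ℝ q r : ℝ) ^ 2) = ‖r - (inner ℝ q r : ℝ) • q‖ := by
    rw [← hr'n, Real.sqrt_sq (norm_nonneg _)]
  have habs := abs_real_inner_le_norm (p - (inner ℝ p q : ℝ) • q) (r - (inner ℝ q r : ℝ) • q)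
  have h2 : -(‖p - (inner ℝ p q : ℝ) • q‖ * ‖r - (inner ℝ q r : ℝ) • q‖)
      ≤ (inner ℝ (p - (inner ℝ p q : ℝ) • q) (r - (inner ℝ q r : ℝ) • q) : ℝ) :=
    neg_le_of_abs_le habs
  rw [h1] at h2
  rw [hps, hrs]
  linarith



lemma quad_id (p q lam a0 a1 x0 x1 : ℝ) (hlam : lam ≠ 0)
    (h1 : a0 ^ 2 - a1 ^ 2 = p / lam) (h2 : 2 * (a0 * a1) = q / lam)
    (h3 : a0 ^ 2 + a1 ^ 2 = 1) :
    p * (x0 ^ 2 - x1 ^ 2) + 2 * q * (x0 * x1)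
      = lam * (2 * (a0 * x0 + a1 * x1) ^ 2 - (x0 ^ 2 + x1 ^ 2)) := by
  rw [eq_div_iff hlam] at h1 h2
  linear_combination (-(x0 ^ 2 - x1 ^ 2)) * h1 + (-(2 * x0 * x1)) * h2
    + (-(lam * (x0 ^ 2 + x1 ^ 2))) * h3

lemma exists_a (p q : ℝ) (hpq : ¬(p = 0 ∧ q = 0)) :
    ∃ a0 a1 : ℝ, a0 ^ 2 + a1 ^ 2 = 1 ∧
      a0 ^ 2 - a1 ^ 2 = p / Real.sqrt (p ^ 2 + q ^ 2) ∧
      2 * (a0 * a1) = q / Real.sqrt (p ^ 2 + q ^ 2) := by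
  have hpos : 0 < p ^ 2 + q ^ 2 := by
    rcases not_and_or.1 hpq with h | h
    · nlinarith [sq_nonneg q, sq_pos_of_ne_zero h]
    · nlinarith [sq_nonneg p, sq_pos_of_ne_zero h]
  set lam := Real.sqrt (p ^ 2 + q ^ 2) with hlamdef
  have hlam : 0 < lam := Real.sqrt_pos.2 hpos
  have hlam2 : lam ^ 2 = p ^ 2 + q ^ 2 := Real.sq_sqrt hpos.le
  have hple : p ^ 2 ≤ lam ^ 2 := by nlinarith [sq_nonneg q]
  have habs : |p| ≤ lam := by
    rw [← Real.sqrt_sq_eq_abs, ← Real.sqrt_sq hlam.le]; exact Real.sqrt_le_sqrt hple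
  have hb1 : -lam ≤ p := (abs_le.1 habs).1
  have hb2 : p ≤ lam := (abs_le.1 habs).2
  have hnn1 : 0 ≤ (1 + p / lam) / 2 := by
    have : -1 ≤ p / lam := by rw [le_div_iff₀ hlam]; linarith
    linarith
  have hnn2 : 0 ≤ (1 - p / lam) / 2 := by
    have : p / lam ≤ 1 := by rw [div_le_one hlam]; linarith
    linarith
  have e0 : Real.sqrt ((1 + p / lam) / 2) ^ 2 = (1 + p / lam) / 2 := Real.sq_sqrt hnn1
  have e1 : ((if 0 ≤ q then (1:ℝ) else -1) * Real.sqrt ((1 - p / lam) / 2)) ^ 2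
      = (1 - p / lam) / 2 := by
    rw [mul_pow]
    have h : (if 0 ≤ q then (1:ℝ) else -1) ^ 2 = 1 := by split_ifs <;> norm_num
    rw [h, one_mul, Real.sq_sqrt hnn2]
  have eprod : Real.sqrt ((1 + p / lam) / 2) * Real.sqrt ((1 - p / lam) / 2)
      = |q| / (2 * lam) := by
    rw [← Real.sqrt_mul hnn1]
    have harg : (1 + p / lam) / 2 * ((1 - p / lam) / 2) = (|q| / (2 * lam)) ^ 2 := by
      have habs2 : (|q| / (2 * lam)) ^ 2 = q ^ 2 / (4 * lam ^ 2) := by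
        rw [div_pow, sq_abs]; ring_nf
      rw [habs2]
      field_simp
      nlinarith [hlam2]
    rw [harg, Real.sqrt_sq (by positivity)]
  refine ⟨Real.sqrt ((1 + p / lam) / 2),
    (if 0 ≤ q then 1 else -1) * Real.sqrt ((1 - p / lam) / 2), ?_, ?_, ?_⟩
  · rw [e0, e1]; field_simp; try ring
  · rw [e0, e1]; field_simp; try ring
  · have : Real.sqrt ((1 + p / lam) / 2)
        * ((if 0 ≤ q then (1:ℝ) else -1) * Real.sqrt ((1 - p / lam) / 2))
        = (if 0 ≤ q then (1:ℝ) else -1) * (|q| / (2 * lam)) := by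
      rw [← eprod]; ring
    rw [this]
    split_ifs with h
    · rw [abs_of_nonneg h]; field_simp
    · rw [abs_of_neg (not_le.1 h)]; field_simp; try ring



set_option maxHeartbeats 2000000 in
lemma key (c : ℝ) (hc2 : c ^ 2 = (2 + Real.sqrt 2) / 4) (hcpos : 0 < c)
    (X : Finset E2) (hX : ∀ x ∈ X, x ≠ 0)
    (hcone : ∀ v : E2, ‖v‖ = 1 → ∃ x ∈ X, c * ‖x‖ < (inner ℝ v x : ℝ))
    (y : E2) (p B : ℝ) :
    ∃ x ∈ X, 0 ≤ (inner ℝ y x : ℝ) + p * (x 0 ^ 2 - x 1 ^ 2) + B * (x 0 * x 1) := by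
  have hs2 : Real.sqrt 2 ^ 2 = 2 := Real.sq_sqrt (by norm_num)
  have hs2nn : (0:ℝ) ≤ Real.sqrt 2 := Real.sqrt_nonneg 2
  have hs2lt : Real.sqrt 2 < 2 := by nlinarith
  have hs2gt : 1 < Real.sqrt 2 := by nlinarith
  set c' := Real.sqrt (1 - c ^ 2) with hc'def
  have h1c2 : 1 - c ^ 2 = (2 - Real.sqrt 2) / 4 := by rw [hc2]; ring
  have hc'2 : c' ^ 2 = (2 - Real.sqrt 2) / 4 := by
    rw [hc'def, Real.sq_sqrt (by linarith)]; exact h1c2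
  have hc'pos : 0 < c' := Real.sqrt_pos.2 (by linarith)
  have hcsum : c ^ 2 + c' ^ 2 = 1 := by rw [hc2, hc'2]; ring
  have hcc' : c' ≤ c := by
    have h1 : 1 - c ^ 2 ≤ c ^ 2 := by rw [hc2]; linarith only [hs2nn]
    have h2 : c' ≤ Real.sqrt (c ^ 2) := by rw [hc'def]; exact Real.sqrt_le_sqrt h1
    rwa [Real.sqrt_sq hcpos.le] at h2
  have hc1 : c ≤ 1 := by
    have h1 : c ^ 2 ≤ 1 := by rw [hc2]; linarith only [hs2lt]
    nlinarith only [h1, hcpos]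
  have hunit : ∀ x : E2, x ≠ 0 → ‖(‖x‖⁻¹ • x)‖ = 1 := fun x hx => norm_smul_inv_norm hx
  -- facts produced by the cone criterion
  have conefacts : ∀ v : E2, ‖v‖ = 1 → ∃ x ∈ X, x ≠ 0 ∧ 0 < ‖x‖ ∧
      c * ‖x‖ < (inner ℝ v x : ℝ) ∧
      c < (inner ℝ v (‖x‖⁻¹ • x) : ℝ) ∧ (inner ℝ v (‖x‖⁻¹ • x) : ℝ) ≤ 1 ∧
      Real.sqrt (1 - (inner ℝ v (‖x‖⁻¹ • x) : ℝ) ^ 2) ≤ c' := by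
    intro v hv
    obtain ⟨x, hxX, hxlt⟩ := hcone v hv
    have hxne := hX x hxX
    have hxpos : 0 < ‖x‖ := norm_pos_iff.2 hxne
    have hti : (inner ℝ v (‖x‖⁻¹ • x) : ℝ) = ‖x‖⁻¹ * (inner ℝ v x : ℝ) :=
      real_inner_smul_right v x _
    have ht : c < (inner ℝ v (‖x‖⁻¹ • x) : ℝ) := by
      rw [hti]
      have h2 : ‖x‖⁻¹ * (c * ‖x‖) < ‖x‖⁻¹ * (inner ℝ v x : ℝ) :=
        mul_lt_mul_of_pos_left hxlt (inv_pos.2 hxpos)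
      have h3 : ‖x‖⁻¹ * (c * ‖x‖) = c := by field_simp
      linarith
    have ht1 : (inner ℝ v (‖x‖⁻¹ • x) : ℝ) ≤ 1 := by
      have h4 := real_inner_le_norm v (‖x‖⁻¹ • x)
      rw [hv, hunit x hxne, one_mul] at h4
      exact h4
    have hsq : Real.sqrt (1 - (inner ℝ v (‖x‖⁻¹ • x) : ℝ) ^ 2) ≤ c' := by
      rw [hc'def]
      apply Real.sqrt_le_sqrt
      have h5 : c * c ≤ (inner ℝ v (‖x‖⁻¹ • x) : ℝ) * (inner ℝ v (‖x‖⁻¹ • x) : ℝ) :=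
        mul_self_le_mul_self hcpos.le ht.le
      linarith only [h5]
    exact ⟨x, hxX, hxne, hxpos, hxlt, ht, ht1, hsq⟩
  by_cases hy : y = 0
  · by_cases hpB : p = 0 ∧ B = 0
    · obtain ⟨x, hxX, -⟩ := conefacts (v2 1 0) (norm_eq_one_of_sq (by norm_num))
      exact ⟨x, hxX, by simp [hy, hpB.1, hpB.2]⟩
    · -- y = 0, quadratic part nontrivial
      have hpq' : ¬(p = 0 ∧ B / 2 = 0) := by
        intro ⟨h1, h2⟩; exact hpB ⟨h1, by linarith⟩
      obtain ⟨a0, a1, ha3, ha1, ha2⟩ := exists_a p (B / 2) hpq'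
      set lam := Real.sqrt (p ^ 2 + (B / 2) ^ 2) with hlamdef
      have hlampos : 0 < lam := by
        apply Real.sqrt_pos.2
        rcases not_and_or.1 hpq' with h | h
        · exact add_pos_of_pos_of_nonneg (sq_pos_of_ne_zero h) (sq_nonneg _)
        · exact add_pos_of_nonneg_of_pos (sq_nonneg _) (sq_pos_of_ne_zero h)
      set a : E2 := v2 a0 a1 with hadef
      have ha : ‖a‖ = 1 := norm_eq_one_of_sq (by simp only [hadef, v2_apply0, v2_apply1]; exact ha3)
      obtain ⟨x, hxX, hxne, hxpos, horig, ht, ht1, hsq⟩ := conefacts a ha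
      refine ⟨x, hxX, ?_⟩
      have hq := quad_id p (B / 2) lam a0 a1 (x 0) (x 1) hlampos.ne' ha1 ha2 ha3
      have hax : (inner ℝ a x : ℝ) = a0 * x 0 + a1 * x 1 := by
        rw [inner_coord]; simp [hadef]
      have hxx : x 0 ^ 2 + x 1 ^ 2 = ‖x‖ ^ 2 := (norm_sq_coord x).symm
      rw [hax] at horig
      have hyz : (inner ℝ y x : ℝ) = 0 := by rw [hy, inner_zero_left]
      rw [hyz]
      -- quadratic positivity:  a·x > c‖x‖ ≥ 0, 2c² - 1 = √2/2 > 0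
      have hcx : 0 ≤ c * ‖x‖ := mul_nonneg hcpos.le (norm_nonneg x)
      have key2 : 0 ≤ lam * (2 * (a0 * x 0 + a1 * x 1) ^ 2 - (x 0 ^ 2 + x 1 ^ 2)) := by
        apply mul_nonneg hlampos.le
        rw [hxx]
        have h8 : c * ‖x‖ * (c * ‖x‖) ≤ (a0 * x 0 + a1 * x 1) * (a0 * x 0 + a1 * x 1) :=
          mul_le_mul horig.le horig.le hcx (le_of_lt (lt_of_le_of_lt hcx horig))
        nlinarith only [h8, sq_nonneg ‖x‖, hs2gt, hc2,
          mul_nonneg (sq_nonneg ‖x‖) hs2nn]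
      linarith only [hq, key2]
  · -- y ≠ 0
    have hypos : 0 < ‖y‖ := norm_pos_iff.2 hy
    set u : E2 := ‖y‖⁻¹ • y with hudef
    have hu : ‖u‖ = 1 := hunit y hy
    by_cases hpB : p = 0 ∧ B = 0
    · obtain ⟨x, hxX, hxne, hxpos, horig, -, -, -⟩ := conefacts u hu
      refine ⟨x, hxX, ?_⟩
      have e1 : (inner ℝ u x : ℝ) = ‖y‖⁻¹ * (inner ℝ y x : ℝ) := by
        rw [hudef]; exact real_inner_smul_left y x _
      have hyx : 0 < (inner ℝ y x : ℝ) := by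
        have h5 : 0 < (inner ℝ u x : ℝ) :=
          lt_of_le_of_lt (mul_nonneg hcpos.le (norm_nonneg x)) horig
        rw [e1] at h5
        nlinarith only [h5, inv_pos.2 hypos]
      rw [hpB.1, hpB.2]
      linarith only [hyx]
    · -- main case
      have hpq' : ¬(p = 0 ∧ B / 2 = 0) := by
        intro ⟨h1, h2⟩; exact hpB ⟨h1, by linarith⟩
      obtain ⟨a0, a1, ha3, ha1, ha2⟩ := exists_a p (B / 2) hpq'
      set lam := Real.sqrt (p ^ 2 + (B / 2) ^ 2) with hlamdef
      have hlampos : 0 < lam := by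
        apply Real.sqrt_pos.2
        rcases not_and_or.1 hpq' with h | h
        · exact add_pos_of_pos_of_nonneg (sq_pos_of_ne_zero h) (sq_nonneg _)
        · exact add_pos_of_nonneg_of_pos (sq_nonneg _) (sq_pos_of_ne_zero h)
      set a : E2 := v2 a0 a1 with hadef
      have ha : ‖a‖ = 1 := norm_eq_one_of_sq (by simp only [hadef, v2_apply0, v2_apply1]; exact ha3)
      set σ : ℝ := if 0 ≤ (inner ℝ a u : ℝ) then 1 else -1 with hσdef
      have hσ2 : σ ^ 2 = 1 := by rw [hσdef]; split_ifs <;> norm_num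
      have hσabs : |σ| = 1 := by rw [hσdef]; split_ifs <;> simp
      set a' : E2 := σ • a with ha'def
      have ha' : ‖a'‖ = 1 := by
        rw [ha'def, norm_smul, Real.norm_eq_abs, hσabs, ha, one_mul]
      have ha'u : 0 ≤ (inner ℝ a' u : ℝ) := by
        rw [ha'def, real_inner_smul_left, hσdef]
        split_ifs with h
        · simpa using h
        · push_neg at h; simp only [neg_one_mul, neg_mul, one_mul]; linarith only [h]
      set w0 : E2 := v2 (-(a' 1)) (a' 0) with hw0def
      have ha'2 : a' 0 ^ 2 + a' 1 ^ 2 = 1 := by rw [← norm_sq_coord, ha']; norm_num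
      set τ : ℝ := if 0 ≤ (inner ℝ w0 u : ℝ) then 1 else -1 with hτdef
      have hτ2 : τ ^ 2 = 1 := by rw [hτdef]; split_ifs <;> norm_num
      have hτabs : |τ| = 1 := by rw [hτdef]; split_ifs <;> simp
      set w : E2 := τ • w0 with hwdef
      have hw0n : ‖w0‖ = 1 := norm_eq_one_of_sq (by
        simp only [hw0def, v2_apply0, v2_apply1]
        linarith only [ha'2, neg_sq (a' 1)])
      have hw : ‖w‖ = 1 := by
        rw [hwdef, norm_smul, Real.norm_eq_abs, hτabs, hw0n, one_mul]
      have hwu : 0 ≤ (inner ℝ w u : ℝ) := by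
        rw [hwdef, real_inner_smul_left, hτdef]
        split_ifs with h
        · simpa using h
        · push_neg at h; simp only [neg_one_mul, neg_mul, one_mul]; linarith only [h]
      have hperp : (inner ℝ w u : ℝ) ^ 2 = 1 - (inner ℝ a' u : ℝ) ^ 2 := by
        rw [hwdef, hw0def]; exact perp_sq a' u ha' hu τ hτ2
      have ha'w : (inner ℝ a' w : ℝ) = 0 := by
        have hsm : ∀ i, w i = τ * w0 i := fun i => rfl
        rw [inner_coord, hsm, hsm, hw0def]
        simp only [v2_apply0, v2_apply1]
        ring
      have ha'a' : (inner ℝ a' a' : ℝ) = 1 := by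
        rw [real_inner_self_eq_norm_sq, ha']; norm_num
      have hww : (inner ℝ w w : ℝ) = 1 := by
        rw [real_inner_self_eq_norm_sq, hw]; norm_num
      set v : E2 := c • a' + c' • w with hvdef
      have hvv : (inner ℝ v v : ℝ) = 1 := by
        rw [hvdef]
        simp only [inner_add_left, inner_add_right, real_inner_smul_left,
          real_inner_smul_right, ha'a', hww, ha'w]
        rw [real_inner_comm a' w, ha'w]
        linear_combination hcsum
      have hv : ‖v‖ = 1 := by
        have h6 : ‖v‖ ^ 2 = 1 := by rw [← real_inner_self_eq_norm_sq, hvv]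
        rw [← Real.sqrt_sq (norm_nonneg v), h6, Real.sqrt_one]
      have hva' : (inner ℝ v a' : ℝ) = c := by
        rw [hvdef]
        simp only [inner_add_left, real_inner_smul_left, ha'a']
        rw [real_inner_comm a' w, ha'w]
        ring
      have hvu : c' ≤ (inner ℝ v u : ℝ) := by
        rw [hvdef]
        simp only [inner_add_left, real_inner_smul_left]
        have hα1 : (inner ℝ a' u : ℝ) ≤ 1 := by
          have h7 := real_inner_le_norm a' u
          rw [ha', hu, one_mul] at h7; exact h7
        have hmle : (inner ℝ w u : ℝ) ≤ 1 := by
          nlinarith only [hperp, hwu, sq_nonneg ((inner ℝ w u : ℝ) - 1),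
            sq_nonneg (inner ℝ a' u : ℝ)]
        have h20 : (inner ℝ a' u : ℝ) ^ 2 ≤ (inner ℝ a' u : ℝ) :=
          by nlinarith only [mul_nonneg ha'u (sub_nonneg.2 hα1)]
        have h21 : (inner ℝ w u : ℝ) ^ 2 ≤ (inner ℝ w u : ℝ) :=
          by nlinarith only [mul_nonneg hwu (sub_nonneg.2 hmle)]
        have h22 : (1:ℝ) ≤ (inner ℝ a' u : ℝ) + (inner ℝ w u : ℝ) := by
          linarith only [h20, h21, hperp]
        have h23 : (c - c') * (inner ℝ a' u : ℝ) ≥ 0 :=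
          mul_nonneg (sub_nonneg.2 hcc') ha'u
        nlinarith only [h22, h23, hc'pos]
      obtain ⟨x, hxX, hxne, hxpos, horig, ht, ht1, hsq⟩ := conefacts v hv
      refine ⟨x, hxX, ?_⟩
      have hxh : ‖(‖x‖⁻¹ • x)‖ = 1 := hunit x hxne
      -- (1) the direction a'
      have hs1 := sph_ineq a' v (‖x‖⁻¹ • x) ha' hv hxh
      rw [real_inner_comm v a', hva'] at hs1
      rw [← hc'def] at hs1
      set t := (inner ℝ v (‖x‖⁻¹ • x) : ℝ) with htdef
      have haxh : Real.sqrt 2 / 2 < (inner ℝ a' (‖x‖⁻¹ • x) : ℝ) := by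
        have h9 : c * c < c * t := mul_lt_mul_of_pos_left ht hcpos
        have h10 : c' * Real.sqrt (1 - t ^ 2) ≤ c' * c' :=
          mul_le_mul_of_nonneg_left hsq hc'pos.le
        have h11 : c ^ 2 - c' ^ 2 = Real.sqrt 2 / 2 := by rw [hc2, hc'2]; ring
        linarith only [hs1, h9, h10, h11]
      -- (2) the direction u
      have hs2' := sph_ineq u v (‖x‖⁻¹ • x) hu hv hxh
      rw [real_inner_comm v u] at hs2'
      have hm1 : (inner ℝ v u : ℝ) ≤ 1 := by
        have h12 := real_inner_le_norm v u
        rw [hv, hu, one_mul] at h12; exact h12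
      have hsqm : Real.sqrt (1 - (inner ℝ v u : ℝ) ^ 2) ≤ c := by
        rw [← Real.sqrt_sq hcpos.le]
        apply Real.sqrt_le_sqrt
        have h12' : c' * c' ≤ (inner ℝ v u : ℝ) * (inner ℝ v u : ℝ) :=
          mul_self_le_mul_self hc'pos.le hvu
        linarith only [h12', hcsum]
      have htpos : 0 < t := lt_trans hcpos ht
      have huxh : 0 < (inner ℝ u (‖x‖⁻¹ • x) : ℝ) := by
        have h13 : c' * c < c' * t := mul_lt_mul_of_pos_left ht hc'pos
        have h14 : c' * t ≤ (inner ℝ v u : ℝ) * t := mul_le_mul_of_nonneg_right hvu htpos.le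
        have h15 : Real.sqrt (1 - (inner ℝ v u : ℝ) ^ 2) * Real.sqrt (1 - t ^ 2) ≤ c * c' :=
          mul_le_mul hsqm hsq (Real.sqrt_nonneg _) hcpos.le
        linarith [hs2', h13, h14, h15]
      -- linear part positive
      have e1 : (inner ℝ u (‖x‖⁻¹ • x) : ℝ) = ‖y‖⁻¹ * (‖x‖⁻¹ * (inner ℝ y x : ℝ)) := by
        rw [hudef, real_inner_smul_left, real_inner_smul_right]
      have e2 : (inner ℝ y x : ℝ) = ‖y‖ * (‖x‖ * (inner ℝ u (‖x‖⁻¹ • x) : ℝ)) := by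
        rw [e1]; field_simp
      have hyx : 0 < (inner ℝ y x : ℝ) := by
        rw [e2]; exact mul_pos hypos (mul_pos hxpos huxh)
      -- quadratic part nonnegative
      have hq := quad_id p (B / 2) lam a0 a1 (x 0) (x 1) hlampos.ne' ha1 ha2 ha3
      have hax : (inner ℝ a x : ℝ) = a0 * x 0 + a1 * x 1 := by
        rw [inner_coord]; simp [hadef]
      have haax : (inner ℝ a' x : ℝ) = σ * (inner ℝ a x : ℝ) := by
        rw [ha'def, real_inner_smul_left]
      have ha'xh : (inner ℝ a' (‖x‖⁻¹ • x) : ℝ) = ‖x‖⁻¹ * (inner ℝ a' x : ℝ) :=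
        real_inner_smul_right a' x _
      have hsqrel : (a0 * x 0 + a1 * x 1) ^ 2
          = ‖x‖ ^ 2 * (inner ℝ a' (‖x‖⁻¹ • x) : ℝ) ^ 2 := by
        rw [ha'xh, haax, hax, mul_pow, mul_pow, hσ2, one_mul]
        field_simp
      have hquad : 0 ≤ p * (x 0 ^ 2 - x 1 ^ 2) + B * (x 0 * x 1) := by
        have h16 : p * (x 0 ^ 2 - x 1 ^ 2) + B * (x 0 * x 1)
            = lam * (2 * (a0 * x 0 + a1 * x 1) ^ 2 - (x 0 ^ 2 + x 1 ^ 2)) := by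
          linear_combination hq
        rw [h16]
        apply mul_nonneg hlampos.le
        have hxx : x 0 ^ 2 + x 1 ^ 2 = ‖x‖ ^ 2 := (norm_sq_coord x).symm
        rw [hsqrel, hxx]
        have hxsq : 0 < ‖x‖ ^ 2 := by positivity
        have h2A : 0 ≤ 2 * (inner ℝ a' (‖x‖⁻¹ • x) : ℝ) ^ 2 - 1 := by
          nlinarith only [haxh, hs2, hs2gt,
            sq_nonneg ((inner ℝ a' (‖x‖⁻¹ • x) : ℝ) - Real.sqrt 2 / 2)]
        nlinarith only [mul_nonneg hxsq.le h2A]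
      linarith only [hyx, hquad]
    


lemma mem_hull (c : ℝ) (hc2 : c ^ 2 = (2 + Real.sqrt 2) / 4) (hcpos : 0 < c)
    (X : Finset E2) (hX : ∀ x ∈ X, x ≠ 0)
    (hcone : ∀ v : E2, ‖v‖ = 1 → ∃ x ∈ X, c * ‖x‖ < (inner ℝ v x : ℝ)) :
    b₀ ∈ convexHull ℝ ((X.image ψV : Finset V5) : Set V5) := by
  by_contra hnot
  obtain ⟨f, u, hfu, hub⟩ := geometric_hahn_banach_closed_point
    (convex_convexHull ℝ _) ((X.image ψV).finite_toSet.isClosed_convexHull (𝕜 := ℝ)) hnot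
  have hf : ∀ x : E2, f (φV x) = f (Es 0) * x 0 + f (Es 1) * x 1
      + f (Es 2) * x 0 ^ 2 + f (Es 3) * (x 0 * x 1) + f (Es 4) * x 1 ^ 2 := by
    intro x
    rw [decomp x]
    simp only [_root_.map_add, _root_.map_smul, smul_eq_mul]
    ring
  set y : E2 := v2 (f (Es 0)) (f (Es 1)) with hydef
  have hyx : ∀ x : E2, (inner ℝ y x : ℝ) = f (Es 0) * x 0 + f (Es 1) * x 1 := by
    intro x; rw [inner_coord]; simp [hydef]
  obtain ⟨x, hxX, hkey⟩ := key c hc2 hcpos X hX hcone y ((f (Es 2) - f (Es 4)) / 2) (f (Es 3))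
  have hxne := hX x hxX
  have hxpos : 0 < ‖x‖ := norm_pos_iff.2 hxne
  have hn2 : x 0 ^ 2 + x 1 ^ 2 = ‖x‖ ^ 2 := (norm_sq_coord x).symm
  have hψx : f (ψV x) = ‖x‖⁻¹ ^ 2 * f (φV x) := by
    rw [ψV, _root_.map_smul, smul_eq_mul]
  have hψmem : ψV x ∈ ((X.image ψV : Finset V5) : Set V5) := by
    simp only [Finset.coe_image, Set.mem_image, Finset.mem_coe]
    exact ⟨x, hxX, rfl⟩
  have h1 : f (ψV x) < u := hfu _ (subset_convexHull ℝ _ hψmem)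
  have hb0f : f b₀ = (f (Es 2) + f (Es 4)) / 2 := by
    rw [b₀]; simp only [_root_.map_add, _root_.map_smul, smul_eq_mul]; ring
  have hge : (f (Es 2) + f (Es 4)) / 2 ≤ f (ψV x) := by
    rw [hψx, hf]
    have hT : ‖x‖⁻¹ ^ 2 * ((f (Es 2) + f (Es 4)) / 2 * (x 0 ^ 2 + x 1 ^ 2))
        = (f (Es 2) + f (Es 4)) / 2 := by
      rw [hn2]; field_simp
    have hSsum : f (Es 0) * x 0 + f (Es 1) * x 1 + f (Es 2) * x 0 ^ 2
        + f (Es 3) * (x 0 * x 1) + f (Es 4) * x 1 ^ 2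
        = ((inner ℝ y x : ℝ) + (f (Es 2) - f (Es 4)) / 2 * (x 0 ^ 2 - x 1 ^ 2)
            + f (Es 3) * (x 0 * x 1))
          + (f (Es 2) + f (Es 4)) / 2 * (x 0 ^ 2 + x 1 ^ 2) := by
      rw [hyx]; ring
    rw [hSsum]
    have h2 : ‖x‖⁻¹ ^ 2 * ((f (Es 2) + f (Es 4)) / 2 * (x 0 ^ 2 + x 1 ^ 2))
        ≤ ‖x‖⁻¹ ^ 2 * (((inner ℝ y x : ℝ) + (f (Es 2) - f (Es 4)) / 2 * (x 0 ^ 2 - x 1 ^ 2)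
            + f (Es 3) * (x 0 * x 1))
          + (f (Es 2) + f (Es 4)) / 2 * (x 0 ^ 2 + x 1 ^ 2)) := by
      apply mul_le_mul_of_nonneg_left _ (by positivity)
      linarith only [hkey]
    linarith only [h2, hT.ge, hT.le]
  linarith only [h1, hub, hb0f.le, hb0f.ge, hge]


theorem extraction (X : Finset E2) (hX : ∀ x ∈ X, x ≠ 0)
    (hmem : b₀ ∈ convexHull ℝ ((X.image ψV : Finset V5) : Set V5)) :
    ∃ s : E2 → ℝ, (∀ x ∈ X, 0 ≤ s x) ∧ (∑ x ∈ X, s x • x) = 0 ∧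
      (∑ x ∈ X, s x • Matrix.of (fun a b => x a * x b))
        = (2:ℝ) • (1 : Matrix (Fin 2) (Fin 2) ℝ) := by
  classical
  obtain ⟨wgt, hwnn, hwsum, hwrep⟩ := (Finset.mem_convexHull').1 hmem
  set rep : V5 → E2 := fun v => if h : ∃ z ∈ X, ψV z = v then h.choose else 0 with hrepdef
  have hrep : ∀ v ∈ X.image ψV, rep v ∈ X ∧ ψV (rep v) = v := by
    intro v hv
    rw [Finset.mem_image] at hv
    obtain ⟨z, hz, hzv⟩ := hv
    have h : ∃ z ∈ X, ψV z = v := ⟨z, hz, hzv⟩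
    rw [hrepdef]
    simp only [dif_pos h]
    exact ⟨h.choose_spec.1, h.choose_spec.2⟩
  set T : Finset E2 := X.filter (fun z => rep (ψV z) = z) with hTdef
  have hTsub : T ⊆ X := Finset.filter_subset _ _
  have himg : T.image ψV = X.image ψV := by
    apply Finset.Subset.antisymm
    · exact Finset.image_subset_image hTsub
    · intro v hv
      obtain ⟨h1, h2⟩ := hrep v hv
      rw [Finset.mem_image]
      refine ⟨rep v, ?_, h2⟩
      rw [hTdef, Finset.mem_filter]
      exact ⟨h1, by rw [h2]⟩
  have hinj : ∀ z ∈ T, ∀ z' ∈ T, ψV z = ψV z' → z = z' := by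
    intro z hz z' hz' he
    rw [hTdef, Finset.mem_filter] at hz hz'
    rw [← hz.2, ← hz'.2, he]
  set s : E2 → ℝ :=
    fun z => if z ∈ X ∧ rep (ψV z) = z then 4 * ‖z‖⁻¹ ^ 2 * wgt (ψV z) else 0 with hsdef
  have hsnn : ∀ z ∈ X, 0 ≤ s z := by
    intro z hz
    rw [hsdef]
    dsimp only
    split_ifs with h
    · have h0 : 0 ≤ wgt (ψV z) := hwnn _ (Finset.mem_image_of_mem _ h.1)
      positivity
    · exact le_refl 0
  have hmaster : (∑ x ∈ X, s x • φV x) = (4:ℝ) • b₀ := by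
    have h1 : (∑ x ∈ X, s x • φV x) = ∑ x ∈ T, (4 * ‖x‖⁻¹ ^ 2 * wgt (ψV x)) • φV x := by
      rw [hTdef, Finset.sum_filter]
      apply Finset.sum_congr rfl
      intro x hx
      rw [hsdef]
      dsimp only
      by_cases h : rep (ψV x) = x
      · rw [if_pos ⟨hx, h⟩, if_pos h]
      · rw [if_neg (fun hc => h hc.2), if_neg h, zero_smul]
    rw [h1]
    have h2 : ∀ x ∈ T, (4 * ‖x‖⁻¹ ^ 2 * wgt (ψV x)) • φV x = ((4:ℝ) * wgt (ψV x)) • ψV x := by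
      intro x hx
      rw [ψV, smul_smul]
      congr 1
      ring
    rw [Finset.sum_congr rfl h2]
    have h3 : (∑ x ∈ T, ((4:ℝ) * wgt (ψV x)) • ψV x)
        = (4:ℝ) • ∑ x ∈ T, wgt (ψV x) • ψV x := by
      rw [Finset.smul_sum]
      apply Finset.sum_congr rfl
      intro x hx
      rw [smul_smul]
    rw [h3]
    have h4 : (∑ x ∈ T, wgt (ψV x) • ψV x) = ∑ v ∈ T.image ψV, wgt v • v :=
      (Finset.sum_image (f := fun v : V5 => wgt v • v) hinj).symm
    rw [h4, himg, hwrep]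
  have hcoord : ∀ j : Fin 5, (∑ x ∈ X, s x * φV x j) = ((4:ℝ) • b₀) j := by
    intro j
    have h := congrArg (fun z : V5 => EuclideanSpace.proj (𝕜 := ℝ) j z) hmaster
    simpa only [map_sum, _root_.map_smul, smul_eq_mul, PiLp.proj_apply, PiLp.smul_apply] using h
  have hb2 : ((4:ℝ) • b₀) 2 = 2 := by
    simp [b₀, Es, EuclideanSpace.single_apply, PiLp.smul_apply, PiLp.add_apply]
    norm_num
  have hb4 : ((4:ℝ) • b₀) 4 = 2 := by
    simp [b₀, Es, EuclideanSpace.single_apply, PiLp.smul_apply, PiLp.add_apply]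
    norm_num
  have hb0 : ((4:ℝ) • b₀) 0 = 0 := by
    simp [b₀, Es, EuclideanSpace.single_apply, PiLp.smul_apply, PiLp.add_apply]
  have hb1 : ((4:ℝ) • b₀) 1 = 0 := by
    simp [b₀, Es, EuclideanSpace.single_apply, PiLp.smul_apply, PiLp.add_apply]
  have hb3 : ((4:ℝ) • b₀) 3 = 0 := by
    simp [b₀, Es, EuclideanSpace.single_apply, PiLp.smul_apply, PiLp.add_apply]
  refine ⟨s, hsnn, ?_, ?_⟩
  · apply PiLp.ext
    intro i
    have hproj : (∑ x ∈ X, s x • x) i = ∑ x ∈ X, s x * x i := by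
      rw [show (∑ x ∈ X, s x • x) i
          = EuclideanSpace.proj (𝕜 := ℝ) i (∑ x ∈ X, s x • x) from rfl]
      rw [map_sum]
      apply Finset.sum_congr rfl
      intro x hx
      rw [_root_.map_smul]
      rfl
    rw [hproj]
    fin_cases i
    · have := hcoord 0; rw [hb0] at this
      simpa [φV_apply0] using this
    · have := hcoord 1; rw [hb1] at this
      simpa [φV_apply1] using this
  · apply Matrix.ext
    intro i j
    have hLHS : (∑ x ∈ X, s x • Matrix.of (fun a b => x a * x b)) i j
        = ∑ x ∈ X, s x * (x i * x j) := by
      rw [Matrix.sum_apply]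
      apply Finset.sum_congr rfl
      intro x hx
      rw [Matrix.smul_apply, Matrix.of_apply, smul_eq_mul]
    rw [hLHS]
    fin_cases i <;> fin_cases j
    · have := hcoord 2; rw [hb2] at this
      rw [Matrix.smul_apply, Matrix.one_apply_eq, smul_eq_mul, mul_one]
      rw [← this]
      apply Finset.sum_congr rfl
      intro x hx
      rw [φV_apply2, sq]
      rfl
    · have := hcoord 3; rw [hb3] at this
      rw [Matrix.smul_apply, Matrix.one_apply_ne (by decide), smul_eq_mul, mul_zero]
      rw [← this]
      apply Finset.sum_congr rfl
      intro x hx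
      rw [φV_apply3]
      rfl
    · have := hcoord 3; rw [hb3] at this
      rw [Matrix.smul_apply, Matrix.one_apply_ne (by decide), smul_eq_mul, mul_zero]
      rw [← this]
      apply Finset.sum_congr rfl
      intro x hx
      rw [φV_apply3, mul_comm (x 0) (x 1)]
      rfl
    · have := hcoord 4; rw [hb4] at this
      rw [Matrix.smul_apply, Matrix.one_apply_eq, smul_eq_mul, mul_one]
      rw [← this]
      apply Finset.sum_congr rfl
      intro x hx
      rw [φV_apply4, sq]
      rfl





theorem main (β : ℝ) (hβ : β = Real.sqrt 2 - 1)
    (X : Finset (EuclideanSpace ℝ (Fin 2)))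
    (hX : ∀ x ∈ X, x ≠ 0)
    (hcone : ∀ v : EuclideanSpace ℝ (Fin 2), ‖v‖ = 1 →
      ∃ x ∈ X, (1 + β ^ 2) ^ (-(1 : ℝ) / 2) * ‖x‖ < (inner ℝ v x : ℝ)) :
    ∃ s : EuclideanSpace ℝ (Fin 2) → ℝ,
      (∀ x ∈ X, 0 ≤ s x) ∧
      (∑ x ∈ X, s x • x) = 0 ∧
      (∑ x ∈ X, s x • Matrix.of (fun a b => x a * x b))
        = (2 : ℝ) • (1 : Matrix (Fin 2) (Fin 2) ℝ) := by
  have hs2 : Real.sqrt 2 ^ 2 = 2 := Real.sq_sqrt (by norm_num)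
  have hs2nn : (0:ℝ) ≤ Real.sqrt 2 := Real.sqrt_nonneg 2
  have hs2lt : Real.sqrt 2 < 2 := by nlinarith
  have hbase : 1 + β ^ 2 = 4 - 2 * Real.sqrt 2 := by
    rw [hβ]; linear_combination hs2
  have hbpos : (0:ℝ) < 1 + β ^ 2 := by rw [hbase]; linarith
  set c : ℝ := (1 + β ^ 2) ^ (-(1 : ℝ) / 2) with hcdef
  have hcpos : 0 < c := Real.rpow_pos_of_pos hbpos _
  have hcsq : c ^ 2 = (1 + β ^ 2)⁻¹ := by
    rw [hcdef, ← Real.rpow_natCast ((1 + β ^ 2) ^ (-(1:ℝ)/2)) 2, ← Real.rpow_mul hbpos.le]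
    norm_num
    exact Real.rpow_neg_one _
  have hc2 : c ^ 2 = (2 + Real.sqrt 2) / 4 := by
    rw [hcsq, hbase]
    have h1 : (4 - 2 * Real.sqrt 2) * ((2 + Real.sqrt 2) / 4) = 1 := by
      linear_combination (-(1:ℝ)/2) * hs2
    exact inv_eq_of_mul_eq_one_right h1
  have hcone' : ∀ v : E2, ‖v‖ = 1 → ∃ x ∈ X, c * ‖x‖ < (inner ℝ v x : ℝ) := hcone
  exact extraction X hX (mem_hull c hc2 hcpos X hX hcone')

end
end ConeStencilAux

/-- Sufficient cone criterion for positive stencils in 2d: with `β = √2 - 1`, if for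
every unit vector `v` the open cone `{x : ⟨v, x⟩ > (1 + β²)^(-1/2) ‖x‖₂}` contains a
point of the finite set `X` of nonzero points, then a positive Laplace stencil on `X`
exists: nonnegative coefficients `s` with `∑ x ∈ X, s x • x = 0` and
`∑ x ∈ X, s x • (x xᵀ) = 2 I₂`. -/
theorem cone_criterion_positive_stencil_2d (β : ℝ) (hβ : β = Real.sqrt 2 - 1)
    (X : Finset (EuclideanSpace ℝ (Fin 2)))
    (hX : ∀ x ∈ X, x ≠ 0)
    (hcone : ∀ v : EuclideanSpace ℝ (Fin 2), ‖v‖ = 1 →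
      ∃ x ∈ X, (1 + β ^ 2) ^ (-(1 : ℝ) / 2) * ‖x‖ < (inner ℝ v x : ℝ)) :
    ∃ s : EuclideanSpace ℝ (Fin 2) → ℝ,
      (∀ x ∈ X, 0 ≤ s x) ∧
      (∑ x ∈ X, s x • x) = 0 ∧
      (∑ x ∈ X, s x • Matrix.of (fun a b => x a * x b))
        = (2 : ℝ) • (1 : Matrix (Fin 2) (Fin 2) ℝ) := by
  exact ConeStencilAux.main β hβ X hX hcone
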